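/- If β is a palindromic composition, then any composition α with the same L-polynomial as β (equivalently, the same multiset of partition coarsenings) equals β or its reverse; i.e., palindromes are L-unique. -/

import Mathlib

/-- A composition: a nonempty list of positive integers. -/
def IsComposition (l : List ℕ) : Prop := l ≠ [] ∧ ∀ x ∈ l, 0 < x

/-- `Coarsens α β` : α is a coarsening of β, i.e. α is obtained from β by
summing blocks of consecutive components. -/
def Coarsens (α β : List ℕ) : Prop :=
  ∃ P : List (List ℕ), P.flatten = β ∧ (∀ p ∈ P, p ≠ []) ∧ α = P.map List.sum

/-- All ways of splitting a list into blocks of consecutive elements. -/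
def splits : List ℕ → List (List (List ℕ))
  | [] => [[]]
  | a :: rest =>
    (splits rest).flatMap fun s =>
      match s with
      | [] => [[[a]]]
      | b :: bs => [(a :: b) :: bs, [a] :: b :: bs]

/-- The list of all coarsenings of a composition. -/
def coarsenings (β : List ℕ) : List (List ℕ) :=
  (splits β).map (fun P => P.map List.sum)

/-- The L-polynomial of a composition, encoded as the multiset of monomials
`x_{λ(α)}` over coarsenings `α` of `β`; each monomial is recorded as the
multiset (partition) of the components of `α`. -/
def Lpoly (β : List ℕ) : Multiset (Multiset ℕ) :=
  ((coarsenings β).map fun α => (α : Multiset ℕ) : List (Multiset ℕ))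

/-- Near-concatenation of compositions. -/
def odot : List ℕ → List ℕ → List ℕ
  | [], β => β
  | [a], [] => [a]
  | [a], b :: bs => (a + b) :: bs
  | a :: b :: as, β => a :: odot (b :: as) β

/-- `odotPow α i` is the `i`-fold near-concatenation `α^{⊙i}`. -/
def odotPow (α : List ℕ) : ℕ → List ℕ
  | 0 => []
  | n + 1 => odot (odotPow α n) α

/-- The composition product `β ∘ α = α^{⊙β₁} · α^{⊙β₂} ⋯ α^{⊙β_k}`. -/
def circ (β α : List ℕ) : List ℕ :=
  (β.map (odotPow α)).flatten

/-- A trivial factorization `β ∘ γ`. -/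
def TrivialFact (β γ : List ℕ) : Prop :=
  β = [1] ∨ γ = [1] ∨ (β.length = 1 ∧ γ.length = 1) ∨
    ((∀ b ∈ β, b = 1) ∧ (∀ c ∈ γ, c = 1))

/-- A composition admitting only trivial factorizations. -/
def IrredComp (f : List ℕ) : Prop :=
  ∀ β γ : List ℕ, IsComposition β → IsComposition γ → f = circ β γ → TrivialFact β γ

/-- Product of a list of compositions under `∘` (with identity `[1]`). -/
def circList : List (List ℕ) → List ℕ
  | [] => [1]
  | f :: fs => circ f (circList fs)

/-- `fs` is an irreducible factorization of `α`:
all factors are irreducible compositions, and no consecutive product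
`α_i ∘ α_{i+1}` is a trivial factorization. -/
def IsIrredFactorization (α : List ℕ) (fs : List (List ℕ)) : Prop :=
  fs ≠ [] ∧ (∀ f ∈ fs, IsComposition f ∧ IrredComp f) ∧
    fs.Chain' (fun a b => ¬ TrivialFact a b) ∧ α = circList fs

/-- `N(γ) = |γ| - ℓ(γ)`. -/
def Nstat (γ : List ℕ) : ℕ := γ.sum - γ.length


lemma mem_splits {l : List ℕ} {P : List (List ℕ)} :
    P ∈ splits l ↔ P.flatten = l ∧ ∀ p ∈ P, p ≠ [] := by
  induction l generalizing P with
  | nil =>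
    simp only [splits, List.mem_singleton]
    constructor
    · rintro rfl; simp
    · rintro ⟨h1, h2⟩
      cases P with
      | nil => rfl
      | cons p ps =>
        exfalso
        have hp := h2 p (by simp)
        cases p with
        | nil => exact hp rfl
        | cons x xs => simp at h1
  | cons a rest ih =>
    simp only [splits, List.mem_flatMap]
    constructor
    · rintro ⟨s, hs, hP⟩
      have ⟨hf, hne⟩ := ih.mp hs
      cases s with
      | nil =>
        simp at hP; subst hP
        simp at hf
        simp [hf.symm]
      | cons b bs =>
        simp at hP
        rcases hP with rfl | rfl
        · refine ⟨by simp_all, ?_⟩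
          intro p hp
          rcases List.mem_cons.mp hp with rfl | hp
          · simp
          · exact hne p (by simp [hp])
        · refine ⟨by simp_all, ?_⟩
          intro p hp
          rcases List.mem_cons.mp hp with rfl | hp
          · simp
          · exact hne p hp
    · rintro ⟨hf, hne⟩
      cases P with
      | nil => simp at hf
      | cons p ps =>
        cases p with
        | nil => exact absurd rfl (hne [] (by simp))
        | cons x xs =>
          simp at hf
          obtain ⟨⟨rfl, hxs⟩, hfl⟩ := hf
          cases xs with
          | nil =>
            cases ps with
            | nil =>
              refine ⟨[], ih.mpr ⟨by simpa using hfl, by simp⟩, ?_⟩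
              simp at hfl ⊢
            | cons b bs =>
              refine ⟨b :: bs, ih.mpr ⟨by simpa using hfl, ?_⟩, ?_⟩
              · intro p hp; exact hne p (by simp [hp])
              · simp
          | cons y ys =>
            refine ⟨(y :: ys) :: ps, ih.mpr ⟨by simpa using hfl, ?_⟩, ?_⟩
            · intro p hp
              rcases List.mem_cons.mp hp with rfl | hp
              · simp
              · exact hne p (by simp [hp])
            · simp

lemma length_splits {l : List ℕ} (hl : l ≠ []) :
    (splits l).length = 2 ^ (l.length - 1) := by
  induction l with
  | nil => simp at hl
  | cons a rest ih =>
    cases rest with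
    | nil => simp [splits]
    | cons b r =>
      rw [splits, List.length_flatMap]
      have : ∀ s ∈ splits (b :: r),
          ((match s with
            | [] => [[[a]]]
            | b :: bs => [(a :: b) :: bs, [a] :: b :: bs]) : List (List (List ℕ))).length = 2 := by
        intro s hs
        have := (mem_splits.mp hs).1
        cases s with
        | nil => simp at this
        | cons p ps => rfl
      rw [List.map_congr_left this]
      simp [List.sum_replicate, ih (by simp)]
      ring

lemma Lpoly_eq (β : List ℕ) :
    Lpoly β = ↑((coarsenings β).map (fun P : List ℕ => (P : Multiset ℕ))) := by
  rw [Lpoly]; congr 1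
  induction coarsenings β with
  | nil => rfl
  | cons x xs ih => simpa using ih

lemma mem_Lpoly {β : List ℕ} {m : Multiset ℕ} :
    m ∈ Lpoly β ↔ ∃ P ∈ splits β, m = ↑(P.map List.sum) := by
  rw [Lpoly_eq]
  simp only [coarsenings, List.map_map, Multiset.mem_coe, List.mem_map, Function.comp_apply]
  constructor
  · rintro ⟨P, hP, rfl⟩; exact ⟨P, hP, rfl⟩
  · rintro ⟨P, hP, rfl⟩; exact ⟨P, hP, rfl⟩


lemma Lpoly_card (β : List ℕ) : Multiset.card (Lpoly β) = (splits β).length := by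
  rw [Lpoly_eq, Multiset.coe_card, List.length_map, coarsenings, List.length_map]

lemma sum_of_mem_Lpoly {β : List ℕ} {m : Multiset ℕ} (h : m ∈ Lpoly β) :
    m.sum = β.sum := by
  obtain ⟨P, hP, rfl⟩ := mem_Lpoly.mp h
  have := (mem_splits.mp hP).1
  rw [Multiset.sum_coe, ← this, List.sum_flatten]

/-- proper prefix sums -/
def ppsums (γ : List ℕ) : Finset ℕ := (Finset.Ioo 0 γ.length).image fun i => (γ.take i).sum

lemma takeSum_lt {γ : List ℕ} (hpos : ∀ x ∈ γ, 0 < x) {i j : ℕ}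
    (hij : i < j) (hj : j ≤ γ.length) : (γ.take i).sum < (γ.take j).sum := by
  have h1 : γ.take i = (γ.take j).take i := by rw [List.take_take, min_eq_left hij.le]
  have h2 : (γ.take j) = (γ.take j).take i ++ (γ.take j).drop i := (List.take_append_drop _ _).symm
  have hlen : ((γ.take j).drop i).length = j - i := by
    simp [List.length_take, min_eq_left hj]
  have hne : (γ.take j).drop i ≠ [] := by
    intro h; rw [h] at hlen; simp at hlen; omega
  have hp : 0 < ((γ.take j).drop i).sum := by
    refine List.sum_pos _ (fun x hx => hpos x ?_) hne
    exact List.mem_of_mem_take (List.mem_of_mem_drop hx)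
  calc (γ.take i).sum = ((γ.take j).take i).sum := by rw [h1]
    _ < ((γ.take j).take i).sum + ((γ.take j).drop i).sum := by omega
    _ = (γ.take j).sum := by rw [← List.sum_append, ← h2]

lemma mem_ppsums_iff {γ : List ℕ} {t : ℕ} :
    t ∈ ppsums γ ↔ ∃ p q : List ℕ, p ≠ [] ∧ q ≠ [] ∧ p ++ q = γ ∧ p.sum = t := by
  simp only [ppsums, Finset.mem_image, Finset.mem_Ioo]
  constructor
  · rintro ⟨i, ⟨hi0, hil⟩, rfl⟩
    refine ⟨γ.take i, γ.drop i, ?_, ?_, List.take_append_drop _ _, rfl⟩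
    · intro h
      rcases List.take_eq_nil_iff.mp h with h' | h'
      · omega
      · rw [h'] at hil; simp at hil
    · intro h
      have := List.drop_eq_nil_iff.mp h
      omega
  · rintro ⟨p, q, hp, hq, rfl, rfl⟩
    refine ⟨p.length, ⟨List.length_pos_iff.mpr hp, ?_⟩, ?_⟩
    · simp [List.length_append]
      exact List.length_pos_iff.mpr hq
    · rw [List.take_left]

lemma card_ppsums {γ : List ℕ} (hpos : ∀ x ∈ γ, 0 < x) :
    (ppsums γ).card = γ.length - 1 := by
  have hinj : Set.InjOn (fun i => (γ.take i).sum) (Finset.Ioo 0 γ.length) := by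
    intro i hi j hj hij
    simp only [Finset.coe_Ioo, Set.mem_Ioo] at hi hj
    by_contra hne
    rcases lt_or_gt_of_ne hne with h | h
    · exact absurd hij (ne_of_lt (takeSum_lt hpos h hj.2.le))
    · exact absurd hij.symm (ne_of_lt (takeSum_lt hpos h hi.2.le))
  rw [ppsums, Finset.card_image_of_injOn hinj, Nat.card_Ioo]
  omega

lemma pos_of_mem_ppsums {γ : List ℕ} (hpos : ∀ x ∈ γ, 0 < x) {t : ℕ}
    (ht : t ∈ ppsums γ) : 0 < t := by
  obtain ⟨p, q, hp, hq, rfl, rfl⟩ := mem_ppsums_iff.mp ht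
  exact List.sum_pos _ (fun x hx => hpos x (by simp [hx])) hp

lemma ppsums_cons {x : ℕ} {a : List ℕ} (ha : a ≠ []) :
    ppsums (x :: a) = insert x ((ppsums a).image (x + ·)) := by
  ext t
  simp only [ppsums, Finset.mem_image, Finset.mem_Ioo, Finset.mem_insert]
  constructor
  · rintro ⟨i, ⟨hi0, hil⟩, rfl⟩
    match i, hi0 with
    | 1, _ => left; simp
    | (k+2), _ =>
      right
      refine ⟨(a.take (k+1)).sum, ⟨k+1, ⟨Nat.succ_pos _, ?_⟩, rfl⟩, ?_⟩
      · simp at hil; omega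
      · simp [List.take_succ_cons]
  · rintro (rfl | ⟨s, ⟨j, ⟨hj0, hjl⟩, rfl⟩, rfl⟩)
    · refine ⟨1, ⟨one_pos, ?_⟩, by simp⟩
      have := List.length_pos_iff.mpr ha
      simp; omega
    · exact ⟨j + 1, ⟨Nat.succ_pos _, by simp; omega⟩, by simp [List.take_succ_cons]⟩

lemma recon : ∀ (a b : List ℕ), (∀ x ∈ a, 0 < x) → (∀ x ∈ b, 0 < x) →
    a.length = b.length → a.sum = b.sum → ppsums a = ppsums b → a = b := by
  intro a
  induction a with
  | nil =>
    intro b _ _ hlen _ _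
    cases b with
    | nil => rfl
    | cons y b' => simp at hlen
  | cons x a' ih =>
    intro b hpa hpb hlen hsum hpp
    cases b with
    | nil => simp at hlen
    | cons y b' =>
      cases a' with
      | nil =>
        cases b' with
        | nil => simp at hsum; rw [hsum]
        | cons z b'' => simp at hlen
      | cons w a'' =>
        have ha' : (w :: a'' : List ℕ) ≠ [] := by simp
        have hb' : b' ≠ [] := by
          intro h; subst h; simp at hlen
        rw [ppsums_cons ha', ppsums_cons hb'] at hpp
        -- show x = y
        have hposa' : ∀ z ∈ (w :: a''), 0 < z := fun z hz => hpa z (by simp [hz])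
        have hposb' : ∀ z ∈ b', 0 < z := fun z hz => hpb z (by simp [hz])
        have hxy : x = y := by
          have hx : x ∈ insert y ((ppsums b').image (y + ·)) := by
            rw [← hpp]; exact Finset.mem_insert_self _ _
          have hy : y ∈ insert x ((ppsums (w :: a'')).image (x + ·)) := by
            rw [hpp]; exact Finset.mem_insert_self _ _
          rcases Finset.mem_insert.mp hx with h | h
          · exact h
          · obtain ⟨s, hs, rfl⟩ := Finset.mem_image.mp h
            have hs0 := pos_of_mem_ppsums hposb' hs
            rcases Finset.mem_insert.mp hy with h' | h'
            · omega
            · obtain ⟨s', hs', h'⟩ := Finset.mem_image.mp h'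
              have := pos_of_mem_ppsums hposa' hs'
              omega
        subst hxy
        have himg : (ppsums (w :: a'')).image (x + ·) = (ppsums b').image (x + ·) := by
          have h1 : x ∉ (ppsums (w :: a'')).image (x + ·) := by
            intro h
            obtain ⟨s, hs, h⟩ := Finset.mem_image.mp h
            have := pos_of_mem_ppsums hposa' hs
            omega
          have h2 : x ∉ (ppsums b').image (x + ·) := by
            intro h
            obtain ⟨s, hs, h⟩ := Finset.mem_image.mp h
            have := pos_of_mem_ppsums hposb' hs
            omega
          have := congrArg (Finset.erase · x) hpp
          simpa [Finset.erase_insert h1, Finset.erase_insert h2] using this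
        have hppeq : ppsums (w :: a'') = ppsums b' := by
          have hinj : Function.Injective (x + ·) := add_right_injective x
          exact Finset.image_injective hinj himg
        have : (w :: a'') = b' := by
          refine ih b' hposa' hposb' ?_ ?_ hppeq
          · simpa using hlen
          · simp only [List.sum_cons] at hsum ⊢; omega
        rw [this]

/-- Palindromic compositions are L-unique: any composition
with the same L-polynomial as a palindrome `β` equals `β` or its reverse. -/
theorem palindrome_L_unique (β α : List ℕ) (hβ : IsComposition β)
    (hα : IsComposition α) (hpal : β.reverse = β) (h : Lpoly α = Lpoly β) :
    α = β ∨ α = β.reverse := by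
  obtain ⟨hβne, hβpos⟩ := hβ
  obtain ⟨hαne, hαpos⟩ := hα
  -- sums are equal
  have hsum : α.sum = β.sum := by
    have hm : ((↑[β.sum] : Multiset ℕ)) ∈ Lpoly β :=
      mem_Lpoly.mpr ⟨[β], mem_splits.mpr ⟨by simp, by simpa using hβne⟩, by simp⟩
    rw [← h] at hm
    have := sum_of_mem_Lpoly hm
    simpa using this.symm
  -- lengths are equal
  have hlen : α.length = β.length := by
    have hc := congrArg Multiset.card h
    rw [Lpoly_card, Lpoly_card, length_splits hαne, length_splits hβne] at hc
    have := Nat.pow_right_injective (le_refl 2) hc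
    have h1 := List.length_pos_iff.mpr hαne
    have h2 := List.length_pos_iff.mpr hβne
    omega
  -- ppsums α ⊆ ppsums β
  have hsub : ppsums α ⊆ ppsums β := by
    intro t ht
    obtain ⟨p', q', hp', hq', heq, rfl⟩ := mem_ppsums_iff.mp ht
    have hm : ((↑[p'.sum, q'.sum] : Multiset ℕ)) ∈ Lpoly α := by
      refine mem_Lpoly.mpr ⟨[p', q'], mem_splits.mpr ⟨by simp [heq], ?_⟩, by simp⟩
      intro p hp
      rcases List.mem_cons.mp hp with rfl | hp
      · exact hp'
      · simp at hp; rw [hp]; exact hq'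
    rw [h] at hm
    obtain ⟨P, hP, hPm⟩ := mem_Lpoly.mp hm
    obtain ⟨hPflat, hPne⟩ := mem_splits.mp hP
    have hPlen : P.length = 2 := by
      have := congrArg Multiset.card hPm
      simpa using this.symm
    match P, hPlen with
    | [p, q], _ =>
      have hflat : p ++ q = β := by simpa using hPflat
      have hpne : p ≠ [] := hPne p (by simp)
      have hqne : q ≠ [] := hPne q (by simp)
      have hmem : p'.sum ∈ ((↑(([p, q]).map List.sum) : Multiset ℕ)) := by
        rw [← hPm]; simp
      simp only [List.map_cons, List.map_nil, Multiset.mem_coe, List.mem_cons,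
        List.not_mem_nil, or_false, List.mem_singleton] at hmem
      rcases hmem with h1 | h1
      · exact mem_ppsums_iff.mpr ⟨p, q, hpne, hqne, hflat, h1.symm⟩
      · refine mem_ppsums_iff.mpr ⟨q.reverse, p.reverse, by simpa using hqne,
          by simpa using hpne, ?_, by rw [List.sum_reverse]; exact h1.symm⟩
        rw [← List.reverse_append, hflat, hpal]
  -- equality of ppsums
  have hpp : ppsums α = ppsums β := by
    refine Finset.eq_of_subset_of_card_le hsub ?_
    rw [card_ppsums hαpos, card_ppsums hβpos, hlen]
  exact Or.inl (recon α β hαpos hβpos hlen hsum hpp)
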